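/- Let α be a finite nonempty type, H a subgroup of Perm α, and let W = W(H, Perm ℕ) ≤ Perm(α × ℕ) be the wreath product of H with the full symmetric group of ℕ. Let Ω be the (finite) set of H-orbits of nonempty subsets of α, and for each o ∈ Ω let deg(o) be the common cardinality of the subsets belonging to o. Then for every natural number n, the number of W-orbits of n-element finite subsets of α × ℕ equals the number of functions m : Ω → ℕ satisfying Σ_{o ∈ Ω} m(o) · deg(o) = n. -/

import Mathlib

/-- The orbit setoid of a permutation group on `n`-element finite subsets. -/
def permSetoid {E : Type*} (G : Subgroup (Equiv.Perm E)) (n : ℕ) :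
    Setoid {s : Set E // s.Finite ∧ s.ncard = n} where
  r s t := ∃ g ∈ G, g '' s.1 = t.1
  iseqv := by
    constructor
    · exact fun s => ⟨1, G.one_mem, by simp⟩
    · rintro s t ⟨g, hg, h⟩
      refine ⟨g⁻¹, G.inv_mem hg, ?_⟩
      rw [← h, ← Set.image_comp]
      ext x; simp
    · rintro s t u ⟨g, hg, h⟩ ⟨g', hg', h'⟩
      refine ⟨g' * g, G.mul_mem hg' hg, ?_⟩
      rw [← h', ← h, ← Set.image_comp]
      ext x; simp

/-- The profile of a permutation group. -/
noncomputable def profile {E : Type*} (G : Subgroup (Equiv.Perm E)) (n : ℕ) : ℕ :=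
  Nat.card (Quotient (permSetoid G n))

/-- The wreath product `H ≀ P` of `H ≤ Perm α` and `P ≤ Perm I`, realized as a
subgroup of `Perm (α × I)`. -/
def wreath {α I : Type*} (H : Subgroup (Equiv.Perm α)) (P : Subgroup (Equiv.Perm I)) :
    Subgroup (Equiv.Perm (α × I)) where
  carrier := {g | ∃ σ ∈ P, ∃ h : I → Equiv.Perm α, (∀ i, h i ∈ H) ∧
    ∀ (a : α) (i : I), g (a, i) = (h i a, σ i)}
  one_mem' := ⟨1, P.one_mem, fun _ => 1, fun _ => H.one_mem, fun _ _ => rfl⟩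
  mul_mem' := by
    rintro g g' ⟨σ, hσ, h, hh, hg⟩ ⟨σ', hσ', h', hh', hg'⟩
    refine ⟨σ * σ', P.mul_mem hσ hσ', fun i => h (σ' i) * h' i,
      fun i => H.mul_mem (hh _) (hh' _), fun a i => ?_⟩
    simp [Equiv.Perm.mul_apply, hg', hg]
  inv_mem' := by
    rintro g ⟨σ, hσ, h, hh, hg⟩
    refine ⟨σ⁻¹, P.inv_mem hσ, fun i => (h (σ⁻¹ i))⁻¹,
      fun i => H.inv_mem (hh _), fun a i => ?_⟩
    have key : g ((h (σ⁻¹ i))⁻¹ a, σ⁻¹ i) = (a, i) := by rw [hg]; simp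
    rw [← key, ← Equiv.Perm.mul_apply, inv_mul_cancel, Equiv.Perm.one_apply]

/-- The orbit setoid of `H ≤ Perm α` acting on the nonempty finite subsets of
`α`; for finite `α` its quotient is the positive-degree part of the age of `H`. -/
def ageSetoid {α : Type*} [DecidableEq α] (H : Subgroup (Equiv.Perm α)) :
    Setoid {s : Finset α // s.Nonempty} where
  r s t := ∃ h ∈ H, s.1.image h = t.1
  iseqv := by
    constructor
    · exact fun s => ⟨1, H.one_mem, by simp⟩
    · rintro s t ⟨h, hh, hst⟩
      refine ⟨h⁻¹, H.inv_mem hh, ?_⟩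
      rw [← hst, Finset.image_image]
      ext x; simp
    · rintro s t u ⟨h, hh, hst⟩ ⟨h', hh', htu⟩
      refine ⟨h' * h, H.mul_mem hh' hh, ?_⟩
      rw [← htu, ← hst, Finset.image_image]
      ext x; simp
    
/-- The degree of an orbit of finite subsets: the common cardinality of its
members. -/
def orbDeg {α : Type*} [DecidableEq α] (H : Subgroup (Equiv.Perm α)) :
    Quotient (ageSetoid H) → ℕ :=
  Quotient.lift (fun s => s.1.card) (by
    rintro s t ⟨h, hh, hst⟩
    simp only [← hst, Finset.card_image_of_injective _ h.injective])

section Aux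

open Finset

variable {α : Type*} [Finite α] [Nonempty α] [DecidableEq α] (H : Subgroup (Equiv.Perm α))

/-- The fiber of a finite subset of `α × ℕ` over a column `i`. -/
def fib (s : Finset (α × ℕ)) (i : ℕ) : Finset α :=
  (s.filter fun p => p.2 = i).image Prod.fst

lemma mem_fib {s : Finset (α × ℕ)} {a : α} {i : ℕ} : a ∈ fib s i ↔ (a, i) ∈ s := by
  simp only [fib, mem_image, mem_filter]
  constructor
  · rintro ⟨⟨b, j⟩, ⟨hb, rfl⟩, rfl⟩; exact hb
  · intro h; exact ⟨(a, i), ⟨h, rfl⟩, rfl⟩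

/-- The support: columns with nonempty fiber. -/
def supp (s : Finset (α × ℕ)) : Finset ℕ := s.image Prod.snd

lemma mem_supp {s : Finset (α × ℕ)} {i : ℕ} : i ∈ supp s ↔ (fib s i).Nonempty := by
  simp only [supp, mem_image, Finset.Nonempty]
  constructor
  · rintro ⟨⟨a, j⟩, h, rfl⟩; exact ⟨a, mem_fib.2 h⟩
  · rintro ⟨a, ha⟩; exact ⟨(a, i), mem_fib.1 ha, rfl⟩

/-- Orbit class of a finset (junk value on the empty set). -/
noncomputable def clsF (t : Finset α) : Quotient (ageSetoid H) :=
  if h : t.Nonempty then ⟦⟨t, h⟩⟧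
  else ⟦⟨{Classical.arbitrary α}, Finset.singleton_nonempty _⟩⟧

lemma clsF_of_nonempty {t : Finset α} (h : t.Nonempty) : clsF H t = ⟦⟨t, h⟩⟧ := dif_pos h

lemma orbDeg_clsF {t : Finset α} (h : t.Nonempty) : orbDeg H (clsF H t) = t.card := by
  rw [clsF_of_nonempty H h]; rfl

lemma clsF_image {t : Finset α} {g : Equiv.Perm α} (hg : g ∈ H) :
    clsF H (t.image g) = clsF H t := by
  by_cases h : t.Nonempty
  · rw [clsF_of_nonempty H h, clsF_of_nonempty H (h.image g)]
    refine Quot.sound (?_ : (ageSetoid H).r ⟨t.image g, h.image g⟩ ⟨t, h⟩)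
    refine ⟨g⁻¹, H.inv_mem hg, ?_⟩
    simp only [Finset.image_image]
    ext x; simp
  · rw [not_nonempty_iff_eq_empty] at h
    subst h; simp

open Classical in
/-- The number of columns of `s` whose fiber lies in the orbit `o`. -/
noncomputable def cnt (s : Finset (α × ℕ)) (o : Quotient (ageSetoid H)) : ℕ :=
  ((supp s).filter fun i => clsF H (fib s i) = o).card

lemma sum_cnt (s : Finset (α × ℕ)) :
    ∑ᶠ o : Quotient (ageSetoid H), cnt H s o * orbDeg H o = s.card := by
  classical
  haveI := Fintype.ofFinite α
  haveI : Finite {t : Finset α // t.Nonempty} := inferInstance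
  haveI : Finite (Quotient (ageSetoid H)) := Quotient.finite _
  haveI := Fintype.ofFinite (Quotient (ageSetoid H))
  rw [finsum_eq_sum_of_fintype]
  have h1 : s.card = ∑ i ∈ supp s, (fib s i).card := by
    rw [Finset.card_eq_sum_card_fiberwise (f := Prod.snd) (t := supp s)
      (fun p hp => Finset.mem_image_of_mem _ hp)]
    refine Finset.sum_congr rfl fun i _ => ?_
    rw [fib, Finset.card_image_of_injOn]
    intro p hp q hq hpq
    simp only [Finset.coe_filter, Set.mem_setOf_eq] at hp hq
    exact Prod.ext hpq (hp.2.trans hq.2.symm)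
  have h2 : ∑ o : Quotient (ageSetoid H),
      ∑ i ∈ (supp s).filter (fun i => clsF H (fib s i) = o), (fib s i).card
      = ∑ i ∈ supp s, (fib s i).card :=
    Finset.sum_fiberwise_of_maps_to (fun i _ => Finset.mem_univ _) _
  rw [h1, ← h2]
  refine Finset.sum_congr rfl fun o _ => ?_
  rw [cnt, Finset.card_eq_sum_ones, Finset.sum_mul, one_mul]
  refine Finset.sum_congr rfl fun i hi => ?_
  simp only [mem_filter] at hi
  rw [← hi.2, orbDeg_clsF H (mem_supp.1 hi.1)]


/-- The wreath-type permutation built from `σ` and a family `h`. -/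
def wr {α : Type*} (σ : Equiv.Perm ℕ) (h : ℕ → Equiv.Perm α) : Equiv.Perm (α × ℕ) :=
  (Equiv.prodComm α ℕ).trans ((Equiv.prodShear σ h).trans (Equiv.prodComm ℕ α))

lemma wr_apply {α : Type*} (σ : Equiv.Perm ℕ) (h : ℕ → Equiv.Perm α) (a : α) (i : ℕ) :
    wr σ h (a, i) = (h i a, σ i) := rfl

lemma fib_image (σ : Equiv.Perm ℕ) (h : ℕ → Equiv.Perm α) (s : Finset (α × ℕ)) (i : ℕ) :
    fib (s.image (wr σ h)) (σ i) = (fib s i).image (h i) := by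
  ext a
  simp only [mem_fib, Finset.mem_image, Finset.mem_image]
  constructor
  · rintro ⟨⟨b, j⟩, hb, hba⟩
    rw [wr_apply] at hba
    obtain ⟨h1, h2⟩ := Prod.mk.injEq .. ▸ hba
    obtain rfl : j = i := σ.injective h2
    exact ⟨b, hb, h1⟩
  · rintro ⟨b, hb, rfl⟩
    exact ⟨(b, i), hb, rfl⟩

lemma supp_image (σ : Equiv.Perm ℕ) (h : ℕ → Equiv.Perm α) (s : Finset (α × ℕ)) :
    supp (s.image (wr σ h)) = (supp s).image σ := by
  unfold supp
  rw [Finset.image_image, Finset.image_image]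
  rfl

open Classical in
lemma cnt_image (σ : Equiv.Perm ℕ) (h : ℕ → Equiv.Perm α) (hh : ∀ i, h i ∈ H)
    (s : Finset (α × ℕ)) (o : Quotient (ageSetoid H)) :
    cnt H (s.image (wr σ h)) o = cnt H s o := by
  classical
  unfold cnt
  rw [supp_image, Finset.filter_image]
  rw [Finset.card_image_of_injective _ σ.injective]
  congr 1
  refine Finset.filter_congr fun i _ => ?_
  rw [fib_image, clsF_image H (hh i)]


open Classical in
/-- The class of the fiber at `i`, `none` if empty. -/
noncomputable def optCls (s : Finset (α × ℕ)) (i : ℕ) :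
    Option (Quotient (ageSetoid H)) :=
  if _ : (fib s i).Nonempty then some (clsF H (fib s i)) else none

lemma optCls_eq_some {s : Finset (α × ℕ)} {i : ℕ} {o : Quotient (ageSetoid H)} :
    optCls H s i = some o ↔ i ∈ supp s ∧ clsF H (fib s i) = o := by
  unfold optCls
  by_cases hne : (fib s i).Nonempty
  · simp [dif_pos hne, mem_supp.2 hne]
  · simp only [dif_neg hne, false_iff, not_and, reduceCtorEq]
    exact fun h => absurd (mem_supp.1 h) hne

lemma optCls_eq_none {s : Finset (α × ℕ)} {i : ℕ} :
    optCls H s i = none ↔ fib s i = ∅ := by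
  unfold optCls
  by_cases hne : (fib s i).Nonempty
  · simp [dif_pos hne, Finset.nonempty_iff_ne_empty.1 hne]
  · simp [dif_neg hne, Finset.not_nonempty_iff_eq_empty.1 hne]

lemma finite_optCls_some (s : Finset (α × ℕ)) (o : Quotient (ageSetoid H)) :
    Finite {i // optCls H s i = some o} := by
  have hsub : {i | optCls H s i = some o} ⊆ ↑(supp s) :=
    fun i hi => (optCls_eq_some H |>.1 hi).1
  exact ((supp s).finite_toSet.subset hsub).to_subtype

lemma card_optCls_some (s : Finset (α × ℕ)) (o : Quotient (ageSetoid H)) :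
    Nat.card {i // optCls H s i = some o} = cnt H s o := by
  classical
  have e : {i // optCls H s i = some o} ≃
      {i // i ∈ (supp s).filter fun i => clsF H (fib s i) = o} :=
    Equiv.subtypeEquivRight (by
      intro i
      rw [optCls_eq_some, Finset.mem_filter])
  rw [Nat.card_congr e, Nat.card_eq_finsetCard]
  unfold cnt
  congr 1

lemma infinite_optCls_none (s : Finset (α × ℕ)) :
    Infinite {i // optCls H s i = none} := by
  have hsub : (↑(supp s) : Set ℕ)ᶜ ⊆ {i | optCls H s i = none} := by
    intro i hi
    simp only [Set.mem_compl_iff, Finset.mem_coe] at hi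
    have : fib s i = ∅ := by
      by_contra hne
      exact hi (mem_supp.2 (Finset.nonempty_iff_ne_empty.2 hne))
    exact (optCls_eq_none H).2 this
  exact (((supp s).finite_toSet.infinite_compl).mono hsub).to_subtype

open Classical in
lemma exists_wr_of_cnt_eq (s t : Finset (α × ℕ)) (hc : ∀ o, cnt H s o = cnt H t o) :
    ∃ σ : Equiv.Perm ℕ, ∃ k : ℕ → Equiv.Perm α, (∀ i, k i ∈ H) ∧
      s.image (wr σ k) = t := by
  classical
  have key : ∀ c, Nonempty ({i // optCls H s i = c} ≃ {i // optCls H t i = c}) := by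
    intro c
    cases c with
    | none =>
      haveI := infinite_optCls_none H s
      haveI := infinite_optCls_none H t
      obtain ⟨d1⟩ := nonempty_denumerable {i // optCls H s i = none}
      obtain ⟨d2⟩ := nonempty_denumerable {i // optCls H t i = none}
      exact ⟨(@Denumerable.eqv _ d1).trans (@Denumerable.eqv _ d2).symm⟩
    | some o =>
      haveI := finite_optCls_some H s o
      haveI := finite_optCls_some H t o
      rw [← Finite.card_eq, card_optCls_some, card_optCls_some]
      exact hc o
  let e := fun c => (key c).some
  let σ : ℕ ≃ ℕ := Equiv.ofFiberEquiv e
  have hσ : ∀ i, optCls H t (σ i) = optCls H s i := fun i => Equiv.ofFiberEquiv_map e i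
  have hex : ∀ i, ∃ k, k ∈ H ∧ (fib s i).image k = fib t (σ i) := by
    intro i
    by_cases hne : (fib s i).Nonempty
    · have h1 : optCls H s i = some (clsF H (fib s i)) :=
        (optCls_eq_some H).2 ⟨mem_supp.2 hne, rfl⟩
      have h2 := (hσ i).trans h1
      rw [optCls_eq_some] at h2
      obtain ⟨hmem, hcls⟩ := h2
      have hne' := mem_supp.1 hmem
      rw [clsF_of_nonempty H hne', clsF_of_nonempty H hne] at hcls
      obtain ⟨g, hgH, hgim⟩ := Quotient.exact hcls
      have hgim' : (fib t (σ i)).image g = fib s i := hgim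
      refine ⟨g⁻¹, H.inv_mem hgH, ?_⟩
      rw [← hgim', Finset.image_image]
      ext x; simp
    · have h0 : fib s i = ∅ := Finset.not_nonempty_iff_eq_empty.1 hne
      have h1 : optCls H s i = none := (optCls_eq_none H).2 h0
      have h2 : fib t (σ i) = ∅ := (optCls_eq_none H).1 ((hσ i).trans h1)
      exact ⟨1, H.one_mem, by simp [h0, h2]⟩
  choose k hk1 hk2 using hex
  refine ⟨σ, k, hk1, ?_⟩
  ext ⟨b, j⟩
  simp only [Finset.mem_image]
  constructor
  · rintro ⟨⟨a, i⟩, ha, hai⟩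
    rw [wr_apply, Prod.mk.injEq] at hai
    obtain ⟨rfl, rfl⟩ := hai
    have hb : k i a ∈ (fib s i).image (k i) :=
      Finset.mem_image_of_mem _ (mem_fib.2 ha)
    rw [hk2 i] at hb
    exact mem_fib.1 hb
  · intro hb
    have hj : σ (σ.symm j) = j := σ.apply_symm_apply j
    have hmem : b ∈ fib t (σ (σ.symm j)) := by rw [hj]; exact mem_fib.2 hb
    rw [← hk2 (σ.symm j)] at hmem
    obtain ⟨a, ha, rfl⟩ := Finset.mem_image.1 hmem
    exact ⟨(a, σ.symm j), mem_fib.1 ha, by rw [wr_apply, hj]⟩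


open Classical in
lemma exists_finset_of_fn (m : Quotient (ageSetoid H) → ℕ) :
    ∃ s : Finset (α × ℕ), ∀ o, cnt H s o = m o := by
  classical
  haveI := Fintype.ofFinite α
  haveI : Finite {u : Finset α // u.Nonempty} := inferInstance
  haveI : Finite (Quotient (ageSetoid H)) := Quotient.finite _
  haveI := Fintype.ofFinite (Quotient (ageSetoid H))
  obtain ⟨enc, henc⟩ := Countable.exists_injective_nat (Quotient (ageSetoid H))
  set col : Quotient (ageSetoid H) → ℕ → ℕ := fun o k => Nat.pair (enc o) k with hcol
  have hcolinj : ∀ {o o' k k'}, col o k = col o' k' → o = o' ∧ k = k' := by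
    intro o o' k k' h
    rw [hcol] at h
    simp only [Nat.pair_eq_pair] at h
    exact ⟨henc h.1, h.2⟩
  set s : Finset (α × ℕ) :=
    Finset.univ.biUnion
      (fun o => (Quotient.out o).1 ×ˢ ((Finset.range (m o)).image (col o))) with hs
  have hmem : ∀ a j, (a, j) ∈ s ↔ ∃ o, a ∈ (Quotient.out o).1 ∧ ∃ k < m o, col o k = j := by
    intro a j
    rw [hs]
    simp only [Finset.mem_biUnion, Finset.mem_univ, true_and, Finset.mem_product,
      Finset.mem_image, Finset.mem_range]
    try tauto
  have hfib1 : ∀ o k, k < m o → fib s (col o k) = (Quotient.out o).1 := by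
    intro o k hk
    ext a
    rw [mem_fib, hmem]
    constructor
    · rintro ⟨o', ha, k', _, hkj⟩
      obtain ⟨rfl, rfl⟩ := hcolinj hkj
      exact ha
    · intro ha
      exact ⟨o, ha, k, hk, rfl⟩
  have hsupp : supp s = Finset.univ.biUnion (fun o => (Finset.range (m o)).image (col o)) := by
    ext j
    rw [mem_supp]
    simp only [Finset.mem_biUnion, Finset.mem_univ, true_and, Finset.mem_image,
      Finset.mem_range]
    constructor
    · rintro ⟨a, ha⟩
      rw [mem_fib, hmem] at ha
      obtain ⟨o, _, k, hk, hkj⟩ := ha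
      exact ⟨o, k, hk, hkj⟩
    · rintro ⟨o, k, hk, rfl⟩
      rw [hfib1 o k hk]
      exact (Quotient.out o).2
  have hP : ∀ o, ∀ j ∈ (Finset.range (m o)).image (col o),
      (clsF H (fib s j) = o ∧ (fib s j).Nonempty) := by
    intro o j hj
    simp only [Finset.mem_image, Finset.mem_range] at hj
    obtain ⟨k, hk, rfl⟩ := hj
    rw [hfib1 o k hk]
    refine ⟨?_, (Quotient.out o).2⟩
    rw [clsF_of_nonempty H (Quotient.out o).2]
    exact Quotient.out_eq o
  refine ⟨s, fun o' => ?_⟩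
  rw [cnt, hsupp, Finset.filter_biUnion, Finset.card_biUnion]
  · have hterm : ∀ o, (((Finset.range (m o)).image (col o)).filter
        fun j => clsF H (fib s j) = o').card = if o = o' then m o else 0 := by
      intro o
      by_cases h : o = o'
      · subst h
        rw [Finset.filter_true_of_mem (fun j hj => (hP o j hj).1), if_pos rfl,
          Finset.card_image_of_injective _ (fun k k' hkk => (hcolinj hkk).2),
          Finset.card_range]
      · rw [Finset.filter_false_of_mem (fun j hj hc => h ((hP o j hj).1.symm.trans hc)),
          if_neg h, Finset.card_empty]
    rw [Finset.sum_congr rfl fun o _ => hterm o, Finset.sum_ite_eq' Finset.univ o' m,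
      if_pos (Finset.mem_univ o')]
  · intro o1 _ o2 _ hne
    simp only [Function.onFun, Finset.disjoint_left]
    intro j hj1 hj2
    have h1 := Finset.filter_subset _ _ hj1
    have h2 := Finset.filter_subset _ _ hj2
    simp only [Finset.mem_image, Finset.mem_range] at h1 h2
    obtain ⟨k1, _, hk1⟩ := h1
    obtain ⟨k2, _, hk2⟩ := h2
    exact hne (hcolinj (hk1.trans hk2.symm)).1

end Aux

/-- For a finite permutation group `H ≤ Perm α` and the wreath product
`W = H ≀ Sym(ℕ)` acting on infinitely many copies of `α`, the number of
`W`-orbits of `n`-element subsets equals the number of multisets of elements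
of the (positive part of the) age of `H` with total degree `n`, i.e. the
number of functions `m : Ω → ℕ` with `∑ m(o)·deg(o) = n`. -/
theorem profile_wreath_symInfty
    (α : Type*) [Finite α] [Nonempty α] [DecidableEq α]
    (H : Subgroup (Equiv.Perm α)) :
    ∀ n : ℕ,
      profile (wreath H (⊤ : Subgroup (Equiv.Perm ℕ))) n =
        Nat.card {m : Quotient (ageSetoid H) → ℕ //
          ∑ᶠ o : Quotient (ageSetoid H), m o * orbDeg H o = n} := by
  intro n
  classical
  set W := wreath H (⊤ : Subgroup (Equiv.Perm ℕ)) with hW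
  -- the counting map, descended to the quotient
  have hwd : ∀ (s t : {s : Set (α × ℕ) // s.Finite ∧ s.ncard = n}),
      (permSetoid W n).r s t → ∀ o, cnt H s.2.1.toFinset o = cnt H t.2.1.toFinset o := by
    rintro s t ⟨g, hg, hst⟩ o
    obtain ⟨σ, -, h, hh, hga⟩ := hg
    have hfun : ⇑g = ⇑(wr σ h) := by
      funext p
      cases p with
      | mk a i => rw [wr_apply, hga]
    have himg : t.2.1.toFinset = s.2.1.toFinset.image (wr σ h) := by
      apply Finset.coe_injective
      rw [Finset.coe_image, Set.Finite.coe_toFinset, Set.Finite.coe_toFinset, ← hfun, hst]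
    rw [himg, cnt_image H σ h hh]
  have hsum : ∀ (s : {s : Set (α × ℕ) // s.Finite ∧ s.ncard = n}),
      ∑ᶠ o : Quotient (ageSetoid H), cnt H s.2.1.toFinset o * orbDeg H o = n := by
    intro s
    rw [sum_cnt]
    rw [← Set.ncard_eq_toFinset_card s.1 s.2.1]
    exact s.2.2
  let Φ : Quotient (permSetoid W n) →
      {m : Quotient (ageSetoid H) → ℕ //
        ∑ᶠ o : Quotient (ageSetoid H), m o * orbDeg H o = n} :=
    Quotient.lift (fun s => ⟨fun o => cnt H s.2.1.toFinset o, hsum s⟩)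
      (fun s t hst => Subtype.ext (funext fun o => hwd s t hst o))
  have hbij : Function.Bijective Φ := by
    constructor
    · refine Quotient.ind fun s => Quotient.ind fun t => ?_
      intro hst
      have hc : ∀ o, cnt H s.2.1.toFinset o = cnt H t.2.1.toFinset o := by
        intro o
        exact congrFun (congrArg Subtype.val hst) o
      obtain ⟨σ, k, hk, him⟩ := exists_wr_of_cnt_eq H _ _ hc
      refine Quotient.sound ⟨wr σ k, ⟨σ, trivial, k, hk, fun a i => rfl⟩, ?_⟩
      have := congrArg (fun u : Finset (α × ℕ) => (↑u : Set (α × ℕ))) him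
      simpa only [Finset.coe_image, Set.Finite.coe_toFinset] using this
    · rintro ⟨m, hm⟩
      obtain ⟨s, hs⟩ := exists_finset_of_fn H m
      have hcard : (↑s : Set (α × ℕ)).ncard = n := by
        rw [Set.ncard_coe_finset, ← sum_cnt H s]
        rw [← hm]
        exact finsum_congr fun o => by rw [hs o]
      refine ⟨⟦⟨↑s, s.finite_toSet, hcard⟩⟧, ?_⟩
      have htf : (s.finite_toSet).toFinset = s := by
        apply Finset.coe_injective
        rw [Set.Finite.coe_toFinset]
      refine Subtype.ext (funext fun o => ?_)
      show cnt H (s.finite_toSet).toFinset o = m o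
      rw [htf]
      exact hs o
  rw [profile]
  exact Nat.card_congr (Equiv.ofBijective Φ hbij)
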